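/- Let (Q, μ) be a measure space and let K be a densely defined linear operator on L²(Q, μ; ℂ) with adjoint K*. Suppose Ψ₀ is in the domain of K, Ψ₀ is not the zero element, Ψ₀ is almost everywhere real-valued and nonnegative, and K Ψ₀ = k₀ · Ψ₀ for some complex number k₀. Then for every φ in the domain of K* that is almost everywhere real-valued with φ(q) > 0 for μ-almost every q, and for all real numbers a, b such that a · φ(q) ≤ −Im((K* φ)(q)) ≤ b · φ(q) for μ-almost every q ∈ Q, one has a ≤ Im(k₀) ≤ b. -/

import Mathlib

open MeasureTheory
open scoped ComplexInnerProductSpace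

/-- If a densely defined operator `K` on `L²(Q, μ; ℂ)` has a nonzero
eigenvector `Ψ₀` which is a.e. real-valued and nonnegative, with eigenvalue `k₀ ∈ ℂ`,
then for every a.e. real-valued, a.e. strictly positive `φ` in the domain of the
adjoint `K*`, and all `a b : ℝ` with `a · φ ≤ −Im (K* φ) ≤ b · φ` a.e.,
one has `a ≤ Im k₀ ≤ b`. -/
theorem im_eigenvalue_bounds_of_nonneg_eigenvector_nonsym
    {Q : Type*} [MeasurableSpace Q] (μ : Measure Q)
    (K : Lp ℂ 2 μ →ₗ.[ℂ] Lp ℂ 2 μ) (hK : Dense (K.domain : Set (Lp ℂ 2 μ)))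
    (Ψ₀ : K.domain) (hΨ₀ne : (Ψ₀ : Lp ℂ 2 μ) ≠ 0)
    (hΨ₀real : ∀ᵐ q ∂μ, (((Ψ₀ : Lp ℂ 2 μ) : Q → ℂ) q).im = 0)
    (hΨ₀nonneg : ∀ᵐ q ∂μ, 0 ≤ (((Ψ₀ : Lp ℂ 2 μ) : Q → ℂ) q).re)
    (k₀ : ℂ) (heig : K Ψ₀ = k₀ • (Ψ₀ : Lp ℂ 2 μ))
    (φ : K.adjoint.domain)
    (hφreal : ∀ᵐ q ∂μ, (((φ : Lp ℂ 2 μ) : Q → ℂ) q).im = 0)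
    (hφpos : ∀ᵐ q ∂μ, 0 < (((φ : Lp ℂ 2 μ) : Q → ℂ) q).re)
    (a b : ℝ)
    (hab : ∀ᵐ q ∂μ,
      a * (((φ : Lp ℂ 2 μ) : Q → ℂ) q).re ≤ -((K.adjoint φ : Q → ℂ) q).im ∧
      -((K.adjoint φ : Q → ℂ) q).im ≤ b * (((φ : Lp ℂ 2 μ) : Q → ℂ) q).re) :
    a ≤ k₀.im ∧ k₀.im ≤ b := by
  set ψ : Lp ℂ 2 μ := (Ψ₀ : Lp ℂ 2 μ) with hψ
  set φ' : Lp ℂ 2 μ := (φ : Lp ℂ 2 μ) with hφ'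
  set χ : Lp ℂ 2 μ := K.adjoint φ with hχ
  -- adjoint identity
  have hadj : ⟪χ, ψ⟫ = ⟪φ', K Ψ₀⟫ := LinearPMap.adjoint_isFormalAdjoint hK φ Ψ₀
  have hadj2 : ⟪χ, ψ⟫ = k₀ * ⟪φ', ψ⟫ := by
    rw [hadj, heig, inner_smul_right]
  -- integrability
  have hInt1 : Integrable (fun q => (starRingEnd ℂ) (φ' q) * ψ q) μ := by
    have := L2.integrable_inner (𝕜 := ℂ) φ' ψ
    simp only [RCLike.inner_apply] at this
    exact this.congr (ae_of_all _ fun q => mul_comm _ _)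
  have hInt2 : Integrable (fun q => (starRingEnd ℂ) (χ q) * ψ q) μ := by
    have := L2.integrable_inner (𝕜 := ℂ) χ ψ
    simp only [RCLike.inner_apply] at this
    exact this.congr (ae_of_all _ fun q => mul_comm _ _)
  set I : ℝ := ∫ q, (φ' q).re * (ψ q).re ∂μ with hI
  -- a.e. pointwise identity for conj φ' * ψ
  have h1 : (fun q => (starRingEnd ℂ) (φ' q) * ψ q) =ᵐ[μ]
      fun q => (((φ' q).re * (ψ q).re : ℝ) : ℂ) := by
    filter_upwards [hφreal, hΨ₀real] with q h1 h2
    apply Complex.ext <;>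
      simp [Complex.mul_re, Complex.mul_im, h1, h2]
  have h2 : (fun q => ((starRingEnd ℂ) (χ q) * ψ q).im) =ᵐ[μ]
      fun q => -(χ q).im * (ψ q).re := by
    filter_upwards [hΨ₀real] with q h2
    simp [Complex.mul_im, h2]
  -- inner products as integrals
  have hinner1 : ⟪φ', ψ⟫ = (I : ℂ) := by
    rw [L2.inner_def]
    simp only [RCLike.inner_apply]
    rw [show (fun q => ψ q * (starRingEnd ℂ) (φ' q)) = fun q => (starRingEnd ℂ) (φ' q) * ψ q
      from funext fun q => mul_comm _ _, integral_congr_ae h1]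
    exact integral_ofReal
  have h3 : ∫ q, ((starRingEnd ℂ) (χ q) * ψ q).im ∂μ
      = (∫ q, (starRingEnd ℂ) (χ q) * ψ q ∂μ).im := integral_im hInt2
  have hinner2im : (⟪χ, ψ⟫ : ℂ).im = ∫ q, -(χ q).im * (ψ q).re ∂μ := by
    rw [L2.inner_def]
    simp only [RCLike.inner_apply]
    rw [show (fun q => ψ q * (starRingEnd ℂ) (χ q)) = fun q => (starRingEnd ℂ) (χ q) * ψ q
      from funext fun q => mul_comm _ _, ← h3, integral_congr_ae h2]
  -- integrability of the real integrands
  have hgInt : Integrable (fun q => (φ' q).re * (ψ q).re) μ := by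
    have := hInt1.re
    refine this.congr ?_
    filter_upwards [h1] with q hq
    rw [hq]; simp
  have hmInt : Integrable (fun q => -(χ q).im * (ψ q).re) μ := hInt2.im.congr h2
  -- I > 0
  have hnn : ∀ᵐ q ∂μ, 0 ≤ (φ' q).re * (ψ q).re := by
    filter_upwards [hφpos, hΨ₀nonneg] with q hp hn
    exact mul_nonneg hp.le hn
  have hIpos : 0 < I := by
    rcases lt_or_eq_of_le (integral_nonneg_of_ae hnn) with h | h
    · exact h
    · exfalso
      have hzero : (fun q => (φ' q).re * (ψ q).re) =ᵐ[μ] 0 :=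
        (integral_eq_zero_iff_of_nonneg_ae hnn hgInt).mp h.symm
      apply hΨ₀ne
      rw [Lp.eq_zero_iff_ae_eq_zero]
      filter_upwards [hzero, hφpos, hΨ₀real] with q hz hp hr
      have hre : (ψ q).re = 0 := by
        rcases mul_eq_zero.mp hz with h | h
        · exact absurd h (ne_of_gt hp)
        · exact h
      exact Complex.ext (by simpa using hre) (by simpa using hr)
  -- the middle integral equals k₀.im * I
  have hmid : ∫ q, -(χ q).im * (ψ q).re ∂μ = k₀.im * I := by
    rw [← hinner2im, hadj2, hinner1]
    simp
  -- bounds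
  have hlow : a * I ≤ ∫ q, -(χ q).im * (ψ q).re ∂μ := by
    rw [hI, ← integral_const_mul]
    refine integral_mono_ae (hgInt.const_mul a) hmInt ?_
    filter_upwards [hab, hΨ₀nonneg] with q ⟨h1, _⟩ hn
    calc a * ((φ' q).re * (ψ q).re) = (a * (φ' q).re) * (ψ q).re := by ring
    _ ≤ -(χ q).im * (ψ q).re := mul_le_mul_of_nonneg_right h1 hn
  have hhigh : (∫ q, -(χ q).im * (ψ q).re ∂μ) ≤ b * I := by
    rw [hI, ← integral_const_mul]
    refine integral_mono_ae hmInt (hgInt.const_mul b) ?_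
    filter_upwards [hab, hΨ₀nonneg] with q ⟨_, h2⟩ hn
    calc -(χ q).im * (ψ q).re ≤ (b * (φ' q).re) * (ψ q).re :=
      mul_le_mul_of_nonneg_right h2 hn
    _ = b * ((φ' q).re * (ψ q).re) := by ring
  rw [hmid] at hlow hhigh
  constructor
  · exact le_of_mul_le_mul_right (by linarith) hIpos
  · exact le_of_mul_le_mul_right (by linarith) hIpos
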